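/- Let H, R : [−π, π] → ℂ and G : [−π, π] → ℝ be continuous with 1 + G(ω) > 0 for all ω, let α ∈ [0, 1] and N₀ > 0, and define M(ω) := |H(ω)|²/(N₀+|H(ω)|²) − 1 and M̃(ω) := α²(M(ω)+1) − α. For continuous V : [−π, π] → ℂ define Ī(V) := (1/2π)∫_{−π}^{π} [log(1+G(ω)) − G(ω) − L₂(ω)/(1+G(ω))] dω + (1/π)∫_{−π}^{π} Re{V(ω)H(ω) − αR(ω)} dω, where L₂(ω) := |V(ω)|²(N₀+|H(ω)|²) + α|R(ω)|² − 2α Re{H(ω)V(ω)R*(ω)}. Set V_opt(ω) := H*(ω)(1 + G(ω) + αR(ω))/(N₀ + |H(ω)|²). Then for every continuous V, Ī(V) ≤ Ī(V_opt), and Ī(V_opt) = 1 + (α/π)∫_{−π}^{π} Re{M(ω)R(ω)} dω + (1/2π)∫_{−π}^{π} [log(1+G(ω)) + M̃(ω)|R(ω)|²/(1+G(ω)) + M(ω)(1+G(ω))] dω. -/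

import Mathlib

open Matrix
open scoped ComplexOrder

private lemma normsq_eq (z : ℂ) : ‖z‖ ^ 2 = z.re ^ 2 + z.im ^ 2 := by
  rw [Complex.sq_norm, Complex.normSq_apply]; ring

/-- The combined (pointwise) integrand of the asymptotic rate. -/
private noncomputable def Fc (H R : ℝ → ℂ) (G : ℝ → ℝ) (α N₀ : ℝ) (V : ℝ → ℂ) (ω : ℝ) : ℝ :=
  Real.log (1 + G ω) - G ω
    - (‖V ω‖ ^ 2 * (N₀ + ‖H ω‖ ^ 2) + α * ‖R ω‖ ^ 2
        - 2 * α * (H ω * V ω * star (R ω)).re) / (1 + G ω)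
    + 2 * (V ω * H ω - (α : ℂ) * R ω).re

set_option maxHeartbeats 1000000 in
/-- front-end-filter part of Proposition 7, Method II for ISI channels.
The asymptotic rate `Ī(V)` is maximized over continuous front-end spectra `V` by
`V_opt(ω) = H*(ω)(1 + G(ω) + αR(ω))/(N₀ + |H(ω)|²)`, with the stated optimal value. -/
theorem isi_method2_frontend
    (H R : ℝ → ℂ) (G : ℝ → ℝ)
    (hHc : ContinuousOn H (Set.Icc (-Real.pi) Real.pi))
    (hRc : ContinuousOn R (Set.Icc (-Real.pi) Real.pi))
    (hGc : ContinuousOn G (Set.Icc (-Real.pi) Real.pi))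
    (hGpos : ∀ ω ∈ Set.Icc (-Real.pi) Real.pi, 0 < 1 + G ω)
    (α : ℝ) (hα : 0 ≤ α ∧ α ≤ 1) (N₀ : ℝ) (hN₀ : 0 < N₀)
    (M Mt : ℝ → ℝ)
    (hM : ∀ ω, M ω = ‖H ω‖ ^ 2 / (N₀ + ‖H ω‖ ^ 2) - 1)
    (hMt : ∀ ω, Mt ω = α ^ 2 * (M ω + 1) - α)
    (L₂ : (ℝ → ℂ) → ℝ → ℝ)
    (hL₂ : ∀ (V : ℝ → ℂ) (ω : ℝ), L₂ V ω = ‖V ω‖ ^ 2 * (N₀ + ‖H ω‖ ^ 2)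
      + α * ‖R ω‖ ^ 2 - 2 * α * (H ω * V ω * star (R ω)).re)
    (Ibar : (ℝ → ℂ) → ℝ)
    (hIbar : ∀ V : ℝ → ℂ, Ibar V =
      (1 / (2 * Real.pi)) * (∫ ω in (-Real.pi)..Real.pi,
          (Real.log (1 + G ω) - G ω - L₂ V ω / (1 + G ω)))
        + (1 / Real.pi) * ∫ ω in (-Real.pi)..Real.pi, (V ω * H ω - (α : ℂ) * R ω).re)
    (Vopt : ℝ → ℂ)
    (hVopt : ∀ ω, Vopt ω = star (H ω) * (((1 + G ω : ℝ) : ℂ) + (α : ℂ) * R ω)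
      / ((N₀ + ‖H ω‖ ^ 2 : ℝ) : ℂ)) :
    (∀ V : ℝ → ℂ, ContinuousOn V (Set.Icc (-Real.pi) Real.pi) → Ibar V ≤ Ibar Vopt) ∧
      Ibar Vopt = 1 + (α / Real.pi) * (∫ ω in (-Real.pi)..Real.pi, ((M ω : ℂ) * R ω).re)
        + (1 / (2 * Real.pi)) * ∫ ω in (-Real.pi)..Real.pi,
            (Real.log (1 + G ω) + Mt ω * ‖R ω‖ ^ 2 / (1 + G ω) + M ω * (1 + G ω)) := by
  have hπ : (0 : ℝ) < Real.pi := Real.pi_pos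
  have hπne : Real.pi ≠ 0 := ne_of_gt hπ
  have hle : -Real.pi ≤ Real.pi := by linarith
  have hIcc : Set.uIcc (-Real.pi) Real.pi = Set.Icc (-Real.pi) Real.pi := Set.uIcc_of_le hle
  set I : Set ℝ := Set.Icc (-Real.pi) Real.pi with hI
  have hS : ∀ ω, (0 : ℝ) < N₀ + ‖H ω‖ ^ 2 := fun ω => by positivity
  have hSne : ∀ ω, (N₀ + ‖H ω‖ ^ 2 : ℝ) ≠ 0 := fun ω => ne_of_gt (hS ω)
  have hgne : ∀ ω ∈ I, (1 + G ω : ℝ) ≠ 0 := fun ω hω => ne_of_gt (hGpos ω hω)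
  -- continuity facts
  have hSC : ContinuousOn (fun ω => N₀ + ‖H ω‖ ^ 2) I := continuousOn_const.add ((hHc.norm).pow 2)
  have hgC : ContinuousOn (fun ω => 1 + G ω) I := continuousOn_const.add hGc
  have hlogC : ContinuousOn (fun ω => Real.log (1 + G ω)) I := ContinuousOn.log hgC hgne
  have hMc : ContinuousOn M I := by
    have hMeq : M = fun ω => ‖H ω‖ ^ 2 / (N₀ + ‖H ω‖ ^ 2) - 1 := funext hM
    rw [hMeq]
    exact (((hHc.norm).pow 2).div hSC fun ω _ => hSne ω).sub continuousOn_const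
  have hMtc : ContinuousOn Mt I := by
    have hMteq : Mt = fun ω => α ^ 2 * (M ω + 1) - α := funext hMt
    rw [hMteq]
    exact (continuousOn_const.mul (hMc.add continuousOn_const)).sub continuousOn_const
  have hVoptc : ContinuousOn Vopt I := by
    have hVeq : Vopt = fun ω => star (H ω) * (((1 + G ω : ℝ) : ℂ) + (α : ℂ) * R ω)
        / ((N₀ + ‖H ω‖ ^ 2 : ℝ) : ℂ) := funext hVopt
    rw [hVeq]
    refine ContinuousOn.div (hHc.star.mul
      ((Complex.continuous_ofReal.comp_continuousOn hgC).add (continuousOn_const.mul hRc)))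
      (Complex.continuous_ofReal.comp_continuousOn hSC) ?_
    intro ω _
    exact_mod_cast hSne ω
  -- integrability of the pieces of `Ibar`
  have hf1i : ∀ V : ℝ → ℂ, ContinuousOn V I → IntervalIntegrable
      (fun ω => Real.log (1 + G ω) - G ω - (‖V ω‖ ^ 2 * (N₀ + ‖H ω‖ ^ 2) + α * ‖R ω‖ ^ 2
        - 2 * α * (H ω * V ω * star (R ω)).re) / (1 + G ω))
      MeasureTheory.volume (-Real.pi) Real.pi := by
    intro V hV
    apply ContinuousOn.intervalIntegrable
    rw [hIcc]
    refine (hlogC.sub hGc).sub (ContinuousOn.div ?_ hgC hgne)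
    exact ((((hV.norm).pow 2).mul hSC).add (continuousOn_const.mul ((hRc.norm).pow 2))).sub
      (continuousOn_const.mul (Complex.continuous_re.comp_continuousOn ((hHc.mul hV).mul hRc.star)))
  have hf2i : ∀ V : ℝ → ℂ, ContinuousOn V I → IntervalIntegrable
      (fun ω => (V ω * H ω - (α : ℂ) * R ω).re) MeasureTheory.volume (-Real.pi) Real.pi := by
    intro V hV
    apply ContinuousOn.intervalIntegrable
    rw [hIcc]
    exact Complex.continuous_re.comp_continuousOn ((hV.mul hHc).sub (continuousOn_const.mul hRc))
  have hFi : ∀ V : ℝ → ℂ, ContinuousOn V I → IntervalIntegrable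
      (Fc H R G α N₀ V) MeasureTheory.volume (-Real.pi) Real.pi := by
    intro V hV
    have h := (hf1i V hV).add ((hf2i V hV).const_mul 2)
    exact h
  -- `Ibar` as a single integral of `Fc`
  have hIbarF : ∀ V : ℝ → ℂ, ContinuousOn V I → Ibar V
      = (1 / (2 * Real.pi)) * ∫ ω in (-Real.pi)..Real.pi, Fc H R G α N₀ V ω := by
    intro V hV
    rw [hIbar V]
    simp only [hL₂]
    have h2 : (1 / Real.pi : ℝ) * (∫ ω in (-Real.pi)..Real.pi, (V ω * H ω - (α : ℂ) * R ω).re)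
        = (1 / (2 * Real.pi)) * ∫ ω in (-Real.pi)..Real.pi,
            2 * (V ω * H ω - (α : ℂ) * R ω).re := by
      rw [intervalIntegral.integral_const_mul]
      field_simp
    rw [h2, ← mul_add, ← intervalIntegral.integral_add (hf1i V hV) ((hf2i V hV).const_mul 2)]
    congr 1
  -- coordinates of `Vopt`
  have hP : ∀ ω, (N₀ + ‖H ω‖ ^ 2) * (Vopt ω).re
      = (H ω).re * ((1 + G ω) + α * (R ω).re) + (H ω).im * (α * (R ω).im) := by
    intro ω
    have hv0 : ((N₀ + ‖H ω‖ ^ 2 : ℝ) : ℂ) * Vopt ω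
        = star (H ω) * (((1 + G ω : ℝ) : ℂ) + (α : ℂ) * R ω) := by
      rw [hVopt ω, mul_div_cancel₀]
      exact_mod_cast hSne ω
    have h1 := congrArg Complex.re hv0
    simp only [Complex.mul_re, Complex.mul_im, Complex.add_re, Complex.add_im,
      Complex.ofReal_re, Complex.ofReal_im, Complex.star_def, Complex.conj_re,
      Complex.conj_im] at h1
    linear_combination h1
  have hQ : ∀ ω, (N₀ + ‖H ω‖ ^ 2) * (Vopt ω).im
      = (H ω).re * (α * (R ω).im) - (H ω).im * ((1 + G ω) + α * (R ω).re) := by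
    intro ω
    have hv0 : ((N₀ + ‖H ω‖ ^ 2 : ℝ) : ℂ) * Vopt ω
        = star (H ω) * (((1 + G ω : ℝ) : ℂ) + (α : ℂ) * R ω) := by
      rw [hVopt ω, mul_div_cancel₀]
      exact_mod_cast hSne ω
    have h1 := congrArg Complex.im hv0
    simp only [Complex.mul_re, Complex.mul_im, Complex.add_re, Complex.add_im,
      Complex.ofReal_re, Complex.ofReal_im, Complex.star_def, Complex.conj_re,
      Complex.conj_im] at h1
    linear_combination h1
  have hpre : ∀ ω, (Vopt ω).re
      = ((H ω).re * ((1 + G ω) + α * (R ω).re) + (H ω).im * (α * (R ω).im))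
        / (N₀ + ‖H ω‖ ^ 2) := by
    intro ω
    rw [eq_div_iff (hSne ω)]
    linear_combination hP ω
  have hpim : ∀ ω, (Vopt ω).im
      = ((H ω).re * (α * (R ω).im) - (H ω).im * ((1 + G ω) + α * (R ω).re))
        / (N₀ + ‖H ω‖ ^ 2) := by
    intro ω
    rw [eq_div_iff (hSne ω)]
    linear_combination hQ ω
  -- pointwise optimality
  have hA : ∀ (V : ℝ → ℂ), ∀ ω ∈ I, Fc H R G α N₀ V ω ≤ Fc H R G α N₀ Vopt ω := by
    intro V ω hω
    have hg := hGpos ω hω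
    have hgne' : (1 + G ω : ℝ) ≠ 0 := ne_of_gt hg
    have hnum : (‖V ω‖ ^ 2 * (N₀ + ‖H ω‖ ^ 2) + α * ‖R ω‖ ^ 2
          - 2 * α * (H ω * V ω * star (R ω)).re)
        - (‖Vopt ω‖ ^ 2 * (N₀ + ‖H ω‖ ^ 2) + α * ‖R ω‖ ^ 2
          - 2 * α * (H ω * Vopt ω * star (R ω)).re)
        + (1 + G ω) * (2 * (Vopt ω * H ω - (α : ℂ) * R ω).re
          - 2 * (V ω * H ω - (α : ℂ) * R ω).re)
        = (N₀ + ‖H ω‖ ^ 2) * ((V ω - Vopt ω).re ^ 2 + (V ω - Vopt ω).im ^ 2) := by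
      rw [normsq_eq (V ω), normsq_eq (Vopt ω), normsq_eq (R ω)]
      simp only [Complex.mul_re, Complex.mul_im, Complex.add_re, Complex.add_im,
        Complex.sub_re, Complex.sub_im, Complex.ofReal_re, Complex.ofReal_im,
        Complex.star_def, Complex.conj_re, Complex.conj_im]
      linear_combination (2 * (V ω).re - 2 * (Vopt ω).re) * hP ω
        + (2 * (V ω).im - 2 * (Vopt ω).im) * hQ ω
    have hdiff : Fc H R G α N₀ Vopt ω - Fc H R G α N₀ V ω
        = (N₀ + ‖H ω‖ ^ 2) * ((V ω - Vopt ω).re ^ 2 + (V ω - Vopt ω).im ^ 2) / (1 + G ω) := by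
      rw [← hnum]
      simp only [Fc]
      field_simp
      ring
    have hpos : 0 ≤ (N₀ + ‖H ω‖ ^ 2) * ((V ω - Vopt ω).re ^ 2 + (V ω - Vopt ω).im ^ 2)
        / (1 + G ω) := by
      apply div_nonneg (by positivity) (le_of_lt hg)
    linarith
  -- pointwise value at the optimum
  have hB : ∀ ω ∈ I, Fc H R G α N₀ Vopt ω
      = 1 + 2 * α * ((M ω : ℂ) * R ω).re
        + (Real.log (1 + G ω) + Mt ω * ‖R ω‖ ^ 2 / (1 + G ω) + M ω * (1 + G ω)) := by
    intro ω hω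
    have hgne' : (1 + G ω : ℝ) ≠ 0 := ne_of_gt (hGpos ω hω)
    have hval : (1 + G ω) * (2 * (Vopt ω * H ω - (α : ℂ) * R ω).re - G ω - 1
          - 2 * α * ((M ω : ℂ) * R ω).re - M ω * (1 + G ω))
        - (‖Vopt ω‖ ^ 2 * (N₀ + ‖H ω‖ ^ 2) + α * ‖R ω‖ ^ 2
          - 2 * α * (H ω * Vopt ω * star (R ω)).re)
        = Mt ω * ‖R ω‖ ^ 2 := by
      have hp' := hpre ω
      have hq' := hpim ω
      rw [normsq_eq (H ω)] at hp' hq'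
      simp only [hM, hMt, Complex.mul_re, Complex.mul_im, Complex.add_re, Complex.add_im,
        Complex.sub_re, Complex.sub_im, Complex.ofReal_re, Complex.ofReal_im,
        Complex.star_def, Complex.conj_re, Complex.conj_im]
      rw [normsq_eq (Vopt ω), normsq_eq (R ω), normsq_eq (H ω), hp', hq']
      have hSne' : N₀ + ((H ω).re ^ 2 + (H ω).im ^ 2) ≠ 0 := by
        rw [← normsq_eq (H ω)]; exact hSne ω
      field_simp
      ring
    have h2 := congrArg (fun t => t / (1 + G ω)) hval
    rw [sub_div, mul_div_cancel_left₀ _ hgne'] at h2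
    simp only [Fc]
    rw [← h2]
    ring
  constructor
  · intro V hV
    rw [hIbarF V hV, hIbarF Vopt hVoptc]
    have hmono := intervalIntegral.integral_mono_on hle (hFi V hV) (hFi Vopt hVoptc) (hA V)
    have h2π : (0 : ℝ) ≤ 1 / (2 * Real.pi) := by positivity
    exact mul_le_mul_of_nonneg_left hmono h2π
  · rw [hIbarF Vopt hVoptc]
    have hiM : IntervalIntegrable (fun ω => 2 * α * ((M ω : ℂ) * R ω).re)
        MeasureTheory.volume (-Real.pi) Real.pi := by
      apply ContinuousOn.intervalIntegrable
      rw [hIcc]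
      exact continuousOn_const.mul (Complex.continuous_re.comp_continuousOn
        ((Complex.continuous_ofReal.comp_continuousOn hMc).mul hRc))
    have hirest : IntervalIntegrable
        (fun ω => Real.log (1 + G ω) + Mt ω * ‖R ω‖ ^ 2 / (1 + G ω) + M ω * (1 + G ω))
        MeasureTheory.volume (-Real.pi) Real.pi := by
      apply ContinuousOn.intervalIntegrable
      rw [hIcc]
      exact (hlogC.add ((hMtc.mul ((hRc.norm).pow 2)).div hgC hgne)).add (hMc.mul hgC)
    have hsplit : (∫ ω in (-Real.pi)..Real.pi, Fc H R G α N₀ Vopt ω)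
        = (∫ ω in (-Real.pi)..Real.pi, (1 : ℝ))
          + ((∫ ω in (-Real.pi)..Real.pi, 2 * α * ((M ω : ℂ) * R ω).re)
            + ∫ ω in (-Real.pi)..Real.pi,
                (Real.log (1 + G ω) + Mt ω * ‖R ω‖ ^ 2 / (1 + G ω) + M ω * (1 + G ω))) := by
      rw [← intervalIntegral.integral_add hiM hirest,
        ← intervalIntegral.integral_add intervalIntegrable_const (hiM.add hirest)]
      apply intervalIntegral.integral_congr
      intro ω hω
      rw [hIcc] at hω
      rw [hB ω hω]
      ring
    have hmid : (∫ ω in (-Real.pi)..Real.pi, 2 * α * ((M ω : ℂ) * R ω).re)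
        = 2 * α * ∫ ω in (-Real.pi)..Real.pi, ((M ω : ℂ) * R ω).re :=
      intervalIntegral.integral_const_mul _ _
    rw [hsplit, hmid, intervalIntegral.integral_const]
    simp only [smul_eq_mul, mul_one]
    field_simp
    ring
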